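/- Let λ > 1 be a real algebraic number such that some Galois conjugate of λ lies on the unit circle in ℂ. Then λ cannot be an eigenvalue of any matrix M in the monoid Γ(Ω) generated by Q_i = I + D_iΩ, where Ω is any symmetric nonnegative integer matrix with zero diagonal. -/

import Mathlib

open Matrix

private lemma eval_charpoly_det {K : Type*} [Field K] {n : ℕ}
    (A : Matrix (Fin n) (Fin n) K) (x : K) :
    (Matrix.charpoly A).eval x = (x • (1 : Matrix (Fin n) (Fin n) K) - A).det := by
  rw [Matrix.charpoly, ← Polynomial.coe_evalRingHom, RingHom.map_det]
  congr 1
  ext i j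
  by_cases h : i = j <;>
    simp [h, Matrix.charmatrix_apply, Matrix.one_apply, Matrix.diagonal, Matrix.smul_apply]

private lemma stdBasis_mulVec {R : Type*} [CommRing R] {n : ℕ} (W : Matrix (Fin n) (Fin n) R)
    (i : Fin n) (v : Fin n → R) :
    (single i i 1 * W) *ᵥ v = Pi.single i ((W *ᵥ v) i) := by
  rw [← mulVec_mulVec]
  ext j
  simp [mulVec, dotProduct, Matrix.single, Pi.single_apply, ite_and, eq_comm]

private lemma quad_step {n : ℕ} (W : Matrix (Fin n) (Fin n) ℂ) (hsym : Wᵀ = W)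
    (hreal : ∀ a b, (starRingEnd ℂ) (W a b) = W a b) (i : Fin n) (hii : W i i = 0)
    (v : Fin n → ℂ) :
    star (((1 + single i i 1 * W)) *ᵥ v) ⬝ᵥ
        (W *ᵥ ((1 + single i i 1 * W) *ᵥ v))
      = star v ⬝ᵥ (W *ᵥ v) + 2 * (Complex.normSq ((W *ᵥ v) i) : ℂ) := by
  set c : ℂ := (W *ᵥ v) i with hc
  have hE : (single i i 1 * W) *ᵥ v = Pi.single i c := stdBasis_mulVec W i v
  have hexp : (1 + single i i 1 * W) *ᵥ v = v + Pi.single i c := by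
    rw [add_mulVec, one_mulVec, hE]
  rw [hexp, mulVec_add, star_add, add_dotProduct, dotProduct_add, dotProduct_add]
  have hstar_single : star (Pi.single i c : Fin n → ℂ) = Pi.single i ((starRingEnd ℂ) c) := by
    ext j; by_cases h : j = i <;> simp [h, Pi.single_apply]
  have hWsingle : W *ᵥ Pi.single i c = fun j => W j i * c := mulVec_single W i c
  have h1 : star (Pi.single i c) ⬝ᵥ (W *ᵥ v) = (starRingEnd ℂ) c * c := by
    rw [hstar_single, single_dotProduct, ← hc]
  have h2 : star v ⬝ᵥ (W *ᵥ Pi.single i c) = c * (starRingEnd ℂ) c := by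
    rw [hWsingle]
    have : star v ⬝ᵥ (fun j => W j i * c) = (∑ j, (starRingEnd ℂ) (v j) * W j i) * c := by
      simp [dotProduct, Finset.sum_mul, mul_assoc]
    rw [this]
    have hcc : (∑ j, (starRingEnd ℂ) (v j) * W j i) = (starRingEnd ℂ) c := by
      rw [hc]
      have : (W *ᵥ v) i = ∑ j, W i j * v j := by simp [mulVec, dotProduct]
      rw [this, map_sum]
      refine Finset.sum_congr rfl fun j _ => ?_
      rw [RingHom.map_mul, hreal]
      have hWij : W i j = W j i := congrFun (congrFun hsym j) i
      rw [hWij, mul_comm]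
    rw [hcc, mul_comm]
  have h3 : star (Pi.single i c) ⬝ᵥ (W *ᵥ Pi.single i c) = 0 := by
    rw [hstar_single, hWsingle, single_dotProduct, hii, zero_mul, mul_zero]
  have this : (starRingEnd ℂ) c * c = (Complex.normSq c : ℂ) := by
    rw [mul_comm, Complex.mul_conj]
  rw [h1, h2, h3, mul_comm c, this]
  ring

theorem stmt11 (lam : ℝ) (hlam : 1 < lam) (halg : IsAlgebraic ℚ lam)
    (hconj : ∃ μ : ℂ, ‖μ‖ = 1 ∧ Polynomial.aeval μ (minpoly ℚ lam) = 0) :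
    ∀ (n : ℕ) (Ω : Matrix (Fin n) (Fin n) ℤ), Ωᵀ = Ω → (∀ i j, 0 ≤ Ω i j) →
      (∀ i, Ω i i = 0) →
      ∀ M ∈ Submonoid.closure
        (Set.range fun i : Fin n =>
          (1 : Matrix (Fin n) (Fin n) ℝ) + single i i 1 * (Ω.map Int.cast)),
      ¬ ∃ v : Fin n → ℝ, v ≠ 0 ∧ M *ᵥ v = lam • v := by
  intro n Ω hsymm hnn hdiag M hM
  rintro ⟨v, hv, hMv⟩
  classical
  set Wc : Matrix (Fin n) (Fin n) ℂ := Ω.map (Int.cast : ℤ → ℂ) with hWc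
  have hWsym : Wcᵀ = Wc := by
    rw [hWc, Matrix.transpose_map.symm, hsymm]
  have hWreal : ∀ a b, (starRingEnd ℂ) (Wc a b) = Wc a b := by
    intro a b; simp [hWc, Matrix.map_apply]
  have hWdiag : ∀ i, Wc i i = 0 := by
    intro i; simp [hWc, Matrix.map_apply, hdiag i]
  -- the key monoid induction
  have key : ∀ N ∈ Submonoid.closure (Set.range fun i : Fin n =>
      (1 : Matrix (Fin n) (Fin n) ℝ) + single i i 1 * (Ω.map Int.cast)),
      (∃ N₀ : Matrix (Fin n) (Fin n) ℚ, N = N₀.map (Rat.cast : ℚ → ℝ)) ∧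
      ∀ w : Fin n → ℂ, ∃ r : ℝ, 0 ≤ r ∧
        star (N.map Complex.ofReal *ᵥ w) ⬝ᵥ (Wc *ᵥ (N.map Complex.ofReal *ᵥ w))
          = star w ⬝ᵥ (Wc *ᵥ w) + (r : ℂ) ∧
        (r = 0 → N.map Complex.ofReal *ᵥ w = w) := by
    intro N hN
    induction hN using Submonoid.closure_induction with
    | mem x hx =>
      obtain ⟨i, rfl⟩ := hx
      have hmapC : ((1 : Matrix (Fin n) (Fin n) ℝ)
            + single i i 1 * Ω.map (Int.cast : ℤ → ℝ)).map Complex.ofReal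
          = 1 + single i i 1 * Wc := by
        ext a b
        by_cases h : a = b <;>
          simp [Matrix.map_apply, Matrix.add_apply, Matrix.mul_apply, Matrix.one_apply, h,
            Matrix.single, hWc, Finset.sum_ite_eq, apply_ite Complex.ofReal]
      constructor
      · refine ⟨1 + single i i 1 * (Ω.map (Int.cast : ℤ → ℚ)), ?_⟩
        ext a b
        by_cases h : a = b <;>
          simp [Matrix.map_apply, Matrix.add_apply, Matrix.mul_apply, Matrix.one_apply, h,
            Matrix.single, apply_ite (Rat.cast : ℚ → ℝ)]
      · intro w
        refine ⟨2 * Complex.normSq ((Wc *ᵥ w) i),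
          by have := Complex.normSq_nonneg ((Wc *ᵥ w) i); linarith, ?_, ?_⟩
        · rw [hmapC, quad_step Wc hWsym hWreal i (hWdiag i) w]
          push_cast
          ring
        · intro hr
          have hc0 : (Wc *ᵥ w) i = 0 := by
            have : Complex.normSq ((Wc *ᵥ w) i) = 0 := by linarith [Complex.normSq_nonneg ((Wc *ᵥ w) i)]
            exact Complex.normSq_eq_zero.mp this
          rw [hmapC, add_mulVec, one_mulVec, stdBasis_mulVec, hc0]
          simp
    | one =>
      have h1 : (1 : Matrix (Fin n) (Fin n) ℝ).map Complex.ofReal = 1 := by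
        ext a b; by_cases h : a = b <;> simp [Matrix.map_apply, Matrix.one_apply, h]
      refine ⟨⟨1, ?_⟩, fun w => ⟨0, le_refl _, by simp [h1], fun _ => by simp [h1]⟩⟩
      ext a b; by_cases h : a = b <;> simp [Matrix.map_apply, Matrix.one_apply, h]
    | mul x y hx hy ihx ihy =>
      obtain ⟨⟨x₀, hx₀⟩, hxq⟩ := ihx
      obtain ⟨⟨y₀, hy₀⟩, hyq⟩ := ihy
      have hmul : ∀ w : Fin n → ℂ,
          (x * y).map Complex.ofReal *ᵥ w
            = x.map Complex.ofReal *ᵥ (y.map Complex.ofReal *ᵥ w) := by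
        intro w
        rw [show (x * y).map Complex.ofReal
            = x.map Complex.ofReal * y.map Complex.ofReal from
          Matrix.map_mul (f := Complex.ofRealHom), ← mulVec_mulVec]
      constructor
      · refine ⟨x₀ * y₀, ?_⟩
        rw [hx₀, hy₀]
        exact (Matrix.map_mul (f := Rat.castHom ℝ)).symm
      · intro w
        obtain ⟨r₁, hr₁0, hr₁e, hr₁i⟩ := hyq w
        obtain ⟨r₂, hr₂0, hr₂e, hr₂i⟩ := hxq (y.map Complex.ofReal *ᵥ w)
        refine ⟨r₁ + r₂, by positivity, ?_, ?_⟩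
        · rw [hmul w, hr₂e, hr₁e]
          push_cast
          ring
        · intro h0
          have h1 : r₁ = 0 := by linarith
          have h2 : r₂ = 0 := by linarith
          rw [hmul w, hr₂i h2, hr₁i h1]
  obtain ⟨⟨M₀, rfl⟩, hQ⟩ := key M hM
  -- lam is a root of the rational charpoly of M₀
  have hcastRR : M₀.map (Rat.cast : ℚ → ℝ) = M₀.map (algebraMap ℚ ℝ) := by
    ext a b
    simp [Matrix.map_apply, eq_ratCast]
  have heval : Polynomial.aeval lam (Matrix.charpoly M₀) = 0 := by
    rw [Polynomial.aeval_def, ← Polynomial.eval_map,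
      ← Matrix.charpoly_map M₀ (algebraMap ℚ ℝ), eval_charpoly_det]
    apply (Matrix.exists_mulVec_eq_zero_iff).mp
    refine ⟨v, hv, ?_⟩
    rw [← hcastRR, sub_mulVec, smul_mulVec, one_mulVec, hMv, sub_self]
  have hdvd := minpoly.dvd ℚ lam heval
  obtain ⟨μ, hμabs, hμroot⟩ := hconj
  have hμcp : Polynomial.aeval μ (Matrix.charpoly M₀) = 0 := by
    obtain ⟨q, hq⟩ := hdvd
    rw [hq, _root_.map_mul, hμroot, zero_mul]
  have hcastRC : M₀.map (Rat.cast : ℚ → ℂ) = M₀.map (algebraMap ℚ ℂ) := by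
    ext a b
    simp [Matrix.map_apply, eq_ratCast]
  have hdetC : (μ • (1 : Matrix (Fin n) (Fin n) ℂ) - M₀.map (Rat.cast : ℚ → ℂ)).det = 0 := by
    rw [hcastRC]
    rw [Polynomial.aeval_def, ← Polynomial.eval_map,
      ← Matrix.charpoly_map M₀ (algebraMap ℚ ℂ), eval_charpoly_det] at hμcp
    exact hμcp
  obtain ⟨w, hw0, hww⟩ := (Matrix.exists_mulVec_eq_zero_iff).mpr hdetC
  have hMw : M₀.map (Rat.cast : ℚ → ℂ) *ᵥ w = μ • w := by
    rw [sub_mulVec, smul_mulVec, one_mulVec, sub_eq_zero] at hww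
    exact hww.symm
  have hmapRC : (M₀.map (Rat.cast : ℚ → ℝ)).map Complex.ofReal = M₀.map (Rat.cast : ℚ → ℂ) := by
    ext a b
    simp [Matrix.map_apply]
  obtain ⟨r, hr0, hre, hri⟩ := hQ w
  rw [hmapRC, hMw] at hre hri
  have hμ2 : (starRingEnd ℂ) μ * μ = 1 := by
    rw [mul_comm, Complex.mul_conj]
    rw [Complex.normSq_eq_norm_sq, hμabs]
    norm_num
  have hsame : star (μ • w) ⬝ᵥ (Wc *ᵥ (μ • w)) = star w ⬝ᵥ (Wc *ᵥ w) := by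
    rw [mulVec_smul, star_smul, smul_dotProduct, dotProduct_smul, smul_eq_mul, smul_eq_mul,
      ← mul_assoc, Complex.star_def, hμ2, one_mul]
  rw [hsame] at hre
  have hrr : r = 0 := by
    have : (r : ℂ) = 0 := by linear_combination -hre
    exact_mod_cast this
  have hwfix : μ • w = w := hri hrr
  have hμ1 : μ = 1 := by
    obtain ⟨j, hj⟩ := Function.ne_iff.mp hw0
    have hj2 : μ * w j = w j := congrFun hwfix j
    have := mul_right_cancel₀ hj (by rw [hj2, one_mul] : μ * w j = 1 * w j)
    exact this
  rw [hμ1] at hμroot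
  have h1q : Polynomial.aeval (1 : ℚ) (minpoly ℚ lam) = 0 := by
    have h := hμroot
    rw [show (1 : ℂ) = algebraMap ℚ ℂ 1 by simp,
      Polynomial.aeval_algebraMap_apply_eq_algebraMap_eval] at h
    have := (map_eq_zero_iff (algebraMap ℚ ℂ) (algebraMap ℚ ℂ).injective).mp h
    simpa using this
  have hint : IsIntegral ℚ lam := halg.isIntegral
  have hirr := minpoly.irreducible hint
  have hdvd1 : (Polynomial.X - Polynomial.C (1 : ℚ)) ∣ minpoly ℚ lam :=
    Polynomial.dvd_iff_isRoot.mpr (by simpa [Polynomial.IsRoot] using h1q)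
  have hass := (Polynomial.irreducible_X_sub_C (1 : ℚ)).associated_of_dvd hirr hdvd1
  have heq : minpoly ℚ lam = Polynomial.X - Polynomial.C 1 :=
    (Polynomial.eq_of_monic_of_associated (minpoly.monic hint)
      (Polynomial.monic_X_sub_C 1) hass.symm)
  have hfin := minpoly.aeval ℚ lam
  rw [heq] at hfin
  simp at hfin
  linarith
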